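/- EDPD with strongly convex dual: if g is μ_g-strongly convex (μ_g > 0, μ_f = 0), with α_{t+1} = (t+1)/(t+2), τ = 2.5/μ_g, τ_t = τ/(t+1), η_t = (t+1)/(τ‖A‖²), y_0 = y_1, the weighted averages x̃_{k+1} = ∑_{t=1}^k (t+1)x_{t+1}/∑_{t=1}^k(t+1) and ỹ_{k+1} analogously satisfy L(x̃_{k+1}, y) − L(x, ỹ_{k+1}) ≤ (2/(k(k+3)))(‖A‖²τ‖x − x_1‖²/2 + 2‖y − y_1‖²/τ) for all (x,y). -/

import Mathlib

open scoped RealInnerProductSpace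

private lemma norm_combo {X : Type*} [NormedAddCommGroup X] [InnerProductSpace ℝ X]
    (u v : X) (a b : ℝ) (hab : a + b = 1) :
    ‖a • u + b • v‖ ^ 2 = a * ‖u‖ ^ 2 + b * ‖v‖ ^ 2 - a * b * ‖u - v‖ ^ 2 := by
  have h1 : ∀ w : X, ‖w‖ ^ 2 = ⟪w, w⟫ := fun w => (real_inner_self_eq_norm_sq w).symm
  rw [h1, h1, h1, h1]
  simp only [inner_add_left, inner_add_right, inner_sub_left, inner_sub_right,
    real_inner_smul_left, real_inner_smul_right]
  rw [real_inner_comm v u]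
  linear_combination (a * ⟪u, u⟫ + b * ⟪v, v⟫) * hab

private lemma norm_shift {X : Type*} [NormedAddCommGroup X] [InnerProductSpace ℝ X]
    (u v : X) (s : ℝ) :
    ‖u - s • v‖ ^ 2 = ‖u‖ ^ 2 - 2 * s * ⟪u, v⟫ + s ^ 2 * ‖v‖ ^ 2 := by
  have h1 : ∀ w : X, ‖w‖ ^ 2 = ⟪w, w⟫ := fun w => (real_inner_self_eq_norm_sq w).symm
  rw [h1, h1, h1]
  simp only [inner_sub_left, inner_sub_right, real_inner_smul_left, real_inner_smul_right]
  rw [real_inner_comm v u]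
  ring

private lemma min_strong {X : Type*} [NormedAddCommGroup X] [InnerProductSpace ℝ X]
    (h : X → ℝ) (μ : ℝ) (hμ : 0 ≤ μ)
    (hsc : ∀ z w : X, ∀ a b : ℝ, 0 ≤ a → 0 ≤ b → a + b = 1 →
      h (a • z + b • w) ≤ a * h z + b * h w - a * b * (μ / 2 * ‖z - w‖ ^ 2))
    (m : X) (hm : ∀ z, h m ≤ h z) :
    ∀ z, h m + μ / 2 * ‖z - m‖ ^ 2 ≤ h z := by
  intro z
  set C : ℝ := μ / 2 * ‖z - m‖ ^ 2 with hC
  have hC0 : 0 ≤ C := by positivity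
  have key : ∀ s : ℝ, 0 < s → s ≤ 1 → (1 - s) * C ≤ h z - h m := by
    intro s hs hs1
    have h1 := hsc z m s (1 - s) hs.le (by linarith) (by ring)
    have h2 := hm (s • z + (1 - s) • m)
    rw [← hC] at h1
    have h5 : s * ((1 - s) * C) ≤ s * (h z - h m) := by nlinarith
    exact le_of_mul_le_mul_left h5 hs
  by_contra hcon
  push_neg at hcon
  have hzm : 0 ≤ h z - h m := by linarith [hm z]
  have hCpos : 0 < C := by nlinarith
  set s₀ : ℝ := (C - (h z - h m)) / C with hs₀
  have hs₀pos : 0 < s₀ := by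
    apply div_pos
    · nlinarith
    · exact hCpos
  have hs₀le : s₀ ≤ 1 := by
    rw [div_le_one hCpos]; nlinarith
  have hk := key (s₀ / 2) (by positivity) (by linarith)
  have hexp : (1 - s₀ / 2) * C = C - (C - (h z - h m)) / 2 := by
    have hsC : s₀ * C = C - (h z - h m) := by rw [hs₀]; exact div_mul_cancel₀ _ hCpos.ne'
    linarith
  nlinarith

private lemma prox_key {X : Type*} [NormedAddCommGroup X] [InnerProductSpace ℝ X]
    (φ : X → ℝ) (μ : ℝ) (hμ : 0 ≤ μ)
    (hφ : ∀ z w : X, ∀ a b : ℝ, 0 ≤ a → 0 ≤ b → a + b = 1 →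
      φ (a • z + b • w) ≤ a * φ z + b * φ w - a * b * (μ / 2 * ‖z - w‖ ^ 2))
    (c : ℝ) (hc : 0 ≤ c) (p m : X)
    (hm : ∀ z, φ m + c * ‖m - p‖ ^ 2 ≤ φ z + c * ‖z - p‖ ^ 2) :
    ∀ z, φ m + c * ‖m - p‖ ^ 2 + (μ / 2 + c) * ‖z - m‖ ^ 2 ≤ φ z + c * ‖z - p‖ ^ 2 := by
  have main := min_strong (fun z => φ z + c * ‖z - p‖ ^ 2) (μ + 2 * c) (by linarith)
    (fun z w a b ha hb hab => by
      have h1 := hφ z w a b ha hb hab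
      have h2 : a • z + b • w - p = a • (z - p) + b • (w - p) := by
        rw [smul_sub, smul_sub]
        rw [show a • z - a • p + (b • w - b • p) = a • z + b • w - (a • p + b • p) by abel]
        rw [← add_smul, hab, one_smul]
      have h3 : ‖a • z + b • w - p‖ ^ 2
          = a * ‖z - p‖ ^ 2 + b * ‖w - p‖ ^ 2 - a * b * ‖(z - p) - (w - p)‖ ^ 2 := by
        rw [h2]; exact norm_combo _ _ a b hab
      have h4 : (z - p) - (w - p) = z - w := by abel
      rw [h4] at h3
      nlinarith [h3]) m (fun z => by have := hm z; linarith)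
  intro z
  have := main z
  nlinarith

private lemma young_ineq {E F : Type*} [NormedAddCommGroup E] [InnerProductSpace ℝ E]
    [NormedAddCommGroup F] [InnerProductSpace ℝ F]
    (A : E →L[ℝ] F) (u : E) (v : F) (c τ' : ℝ) (hc : 0 ≤ c) (hτ : 0 < τ') :
    c * ⟪A u, v⟫ ≤ τ' * ‖A‖ ^ 2 / 2 * ‖u‖ ^ 2 + c ^ 2 / (2 * τ') * ‖v‖ ^ 2 := by
  have h1 : ⟪A u, v⟫ ≤ ‖A u‖ * ‖v‖ := real_inner_le_norm _ _
  have h2 : ‖A u‖ ≤ ‖A‖ * ‖u‖ := A.le_opNorm u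
  have h3 : c * ⟪A u, v⟫ ≤ c * (‖A‖ * ‖u‖ * ‖v‖) := by
    have h4 := mul_le_mul_of_nonneg_left h1 hc
    have h5 : c * (‖A u‖ * ‖v‖) ≤ c * (‖A‖ * ‖u‖ * ‖v‖) := by
      have := mul_le_mul_of_nonneg_right h2 (norm_nonneg v)
      nlinarith
    linarith
  have key : c * (‖A‖ * ‖u‖ * ‖v‖) ≤ τ' * ‖A‖ ^ 2 / 2 * ‖u‖ ^ 2 + c ^ 2 / (2 * τ') * ‖v‖ ^ 2 := by
    have e : 2 * τ' * (τ' * ‖A‖ ^ 2 / 2 * ‖u‖ ^ 2 + c ^ 2 / (2 * τ') * ‖v‖ ^ 2)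
        = τ' ^ 2 * ‖A‖ ^ 2 * ‖u‖ ^ 2 + c ^ 2 * ‖v‖ ^ 2 := by
      field_simp
    have h6 : 2 * τ' * (c * (‖A‖ * ‖u‖ * ‖v‖))
        ≤ 2 * τ' * (τ' * ‖A‖ ^ 2 / 2 * ‖u‖ ^ 2 + c ^ 2 / (2 * τ') * ‖v‖ ^ 2) := by
      rw [e]
      nlinarith [sq_nonneg (τ' * ‖A‖ * ‖u‖ - c * ‖v‖)]
    exact le_of_mul_le_mul_left h6 (by linarith)
  linarith

set_option maxHeartbeats 3000000 in
theorem stmt18 {E F : Type*} [NormedAddCommGroup E] [InnerProductSpace ℝ E]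
    [NormedAddCommGroup F] [InnerProductSpace ℝ F]
    (f : E → ℝ) (g : F → ℝ) (A : E →L[ℝ] F)
    (μg τ : ℝ) (hμg : 0 < μg) (hτ : τ = 2.5 / μg)
    (hf : ConvexOn ℝ Set.univ f)
    (hg : StrongConvexOn Set.univ μg g)
    (τt η α : ℕ → ℝ)
    (hτt : ∀ t, τt t = τ / ((t : ℝ) + 1))
    (hη : ∀ t, η t = ((t : ℝ) + 1) / (τ * ‖A‖ ^ 2))
    (hα : ∀ t, α t = (t : ℝ) / ((t : ℝ) + 1))
    (x : ℕ → E) (y yh : ℕ → F)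
    (hy0 : y 0 = y 1)
    (hyh : ∀ t ≥ 1, yh t = α t • (y t - y (t - 1)) + y t)
    (hx : ∀ t ≥ 1, ∀ z,
      f (x (t + 1)) + ⟪A (x (t + 1)), yh t⟫ + ‖x (t + 1) - x t‖ ^ 2 / (2 * η t) ≤
      f z + ⟪A z, yh t⟫ + ‖z - x t‖ ^ 2 / (2 * η t))
    (hy : ∀ t ≥ 1, ∀ z,
      ‖y (t + 1) - (y t + τt t • A (x (t + 1)))‖ ^ 2 / (2 * τt t) + g (y (t + 1)) ≤
      ‖z - (y t + τt t • A (x (t + 1)))‖ ^ 2 / (2 * τt t) + g z)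
    (L : E → F → ℝ) (hL : ∀ u v, L u v = f u + ⟪A u, v⟫ - g v) :
    ∀ k : ℕ, 1 ≤ k → ∀ (xx : E) (yy : F),
      L ((∑ t ∈ Finset.Icc 1 k, ((t : ℝ) + 1))⁻¹ •
            ∑ t ∈ Finset.Icc 1 k, ((t : ℝ) + 1) • x (t + 1)) yy
        - L xx ((∑ t ∈ Finset.Icc 1 k, ((t : ℝ) + 1))⁻¹ •
            ∑ t ∈ Finset.Icc 1 k, ((t : ℝ) + 1) • y (t + 1)) ≤
        2 / ((k : ℝ) * (k + 3)) *
          (‖A‖ ^ 2 * τ * ‖xx - x 1‖ ^ 2 / 2 + 2 * ‖yy - y 1‖ ^ 2 / τ) := by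
  intro k hk xx yy
  have hτpos : 0 < τ := by rw [hτ]; positivity
  have hτne : τ ≠ 0 := ne_of_gt hτpos
  have hτμ : τ * μg = 2.5 := by rw [hτ]; field_simp
  obtain ⟨ρ, hρ⟩ : ∃ r : ℝ, r = (2*τ)⁻¹ := ⟨_, rfl⟩
  have hρ0 : 0 ≤ ρ := by rw [hρ]; positivity
  have h2τρ : 2*τ*ρ = 1 := by rw [hρ]; exact mul_inv_cancel₀ (by positivity)
  have hμρ : μg/2 = 2.5*ρ := by linear_combination (-μg/2)*h2τρ + ρ*hτμ
  -- The one-step inequality, weighted by (t+1)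
  have step : ∀ t : ℕ, 1 ≤ t →
      ((t:ℝ)+1) * (L (x (t+1)) yy - L xx (y (t+1))) ≤
        ((t:ℝ)+1) * ⟪A (x (t+1)) - A xx, y (t+1) - y t⟫
        - (t:ℝ) * ⟪A (x (t+1)) - A xx, y t - y (t-1)⟫
        + τ * ‖A‖^2/2 * ‖xx - x t‖^2 - τ * ‖A‖^2/2 * ‖xx - x (t+1)‖^2
        - τ * ‖A‖^2/2 * ‖x (t+1) - x t‖^2
        + ((t:ℝ)+1)^2*ρ * ‖yy - y t‖^2
        - (((t:ℝ)+1)^2 + 2.5*((t:ℝ)+1))*ρ * ‖yy - y (t+1)‖^2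
        - ((t:ℝ)+1)^2*ρ * ‖y (t+1) - y t‖^2 := by
    intro t ht
    have ht1 : (0:ℝ) < (t:ℝ) + 1 := by positivity
    obtain ⟨cxt, hcxt_def⟩ : ∃ c : ℝ, c = (2 * η t)⁻¹ := ⟨_, rfl⟩
    have hcxt : cxt = τ * ‖A‖^2 / (2 * ((t:ℝ)+1)) := by
      rw [hcxt_def, hη,
        show (2:ℝ) * (((t:ℝ)+1) / (τ * ‖A‖^2)) = (2*((t:ℝ)+1)) / (τ * ‖A‖^2) from by ring,
        inv_div]
    have hcxt0 : 0 ≤ cxt := by rw [hcxt]; positivity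
    have hφx : ∀ z w : E, ∀ a b : ℝ, 0 ≤ a → 0 ≤ b → a + b = 1 →
        (fun z => f z + ⟪A z, yh t⟫) (a • z + b • w) ≤
          a * (fun z => f z + ⟪A z, yh t⟫) z + b * (fun z => f z + ⟪A z, yh t⟫) w
          - a * b * ((0:ℝ) / 2 * ‖z - w‖ ^ 2) := by
      intro z w a b ha hb hab
      have hfc := hf.2 (Set.mem_univ z) (Set.mem_univ w) ha hb hab
      simp only [smul_eq_mul] at hfc
      have hlin : ⟪A (a • z + b • w), yh t⟫ = a * ⟪A z, yh t⟫ + b * ⟪A w, yh t⟫ := by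
        simp [map_add, map_smul, inner_add_left, real_inner_smul_left]
      simp only
      rw [hlin]
      linarith
    have hxmin : ∀ z, (fun z => f z + ⟪A z, yh t⟫) (x (t+1)) + cxt * ‖x (t+1) - x t‖ ^ 2 ≤
        (fun z => f z + ⟪A z, yh t⟫) z + cxt * ‖z - x t‖ ^ 2 := by
      intro z
      have h := hx t ht z
      have hdiv : ∀ X : ℝ, X / (2 * η t) = cxt * X := fun X => by
        rw [hcxt_def, div_eq_mul_inv, mul_comm]
      rw [hdiv, hdiv] at h
      simp only
      linarith
    have hx2 := prox_key (fun z => f z + ⟪A z, yh t⟫) 0 le_rfl hφx cxt hcxt0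
      (x t) (x (t+1)) hxmin xx
    obtain ⟨cyt, hcyt_def⟩ : ∃ c : ℝ, c = (2 * τt t)⁻¹ := ⟨_, rfl⟩
    have hτtpos : 0 < τt t := by rw [hτt]; positivity
    have hcyt : cyt = ((t:ℝ)+1) / (2*τ) := by
      rw [hcyt_def, hτt,
        show (2:ℝ) * (τ / ((t:ℝ)+1)) = (2*τ) / ((t:ℝ)+1) from by ring,
        inv_div]
    have hcyt0 : 0 ≤ cyt := by rw [hcyt]; positivity
    have hgsc : ∀ z w : F, ∀ a b : ℝ, 0 ≤ a → 0 ≤ b → a + b = 1 →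
        g (a • z + b • w) ≤ a * g z + b * g w - a * b * (μg / 2 * ‖z - w‖ ^ 2) := by
      intro z w a b ha hb hab
      have := hg.2 (Set.mem_univ z) (Set.mem_univ w) ha hb hab
      simpa [smul_eq_mul] using this
    have hymin : ∀ z, g (y (t+1)) + cyt * ‖y (t+1) - (y t + τt t • A (x (t+1)))‖ ^ 2 ≤
        g z + cyt * ‖z - (y t + τt t • A (x (t+1)))‖ ^ 2 := by
      intro z
      have h := hy t ht z
      have hdiv : ∀ X : ℝ, X / (2 * τt t) = cyt * X := fun X => by
        rw [hcyt_def, div_eq_mul_inv, mul_comm]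
      rw [hdiv, hdiv] at h
      linarith
    have hy2 := prox_key g μg hμg.le hgsc cyt hcyt0
      (y t + τt t • A (x (t+1))) (y (t+1)) hymin yy
    have hexp' : ∀ z : F, cyt * ‖z - (y t + τt t • A (x (t+1)))‖ ^ 2 =
        cyt * ‖z - y t‖ ^ 2 - ⟪A (x (t+1)), z - y t⟫
        + cyt * (τt t) ^ 2 * ‖A (x (t+1))‖ ^ 2 := by
      intro z
      have h1 : z - (y t + τt t • A (x (t+1))) = (z - y t) - τt t • A (x (t+1)) := by
        abel
      rw [h1, norm_shift]
      have h3 : cyt * (2 * τt t) = 1 := by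
        rw [hcyt_def]; exact inv_mul_cancel₀ (by positivity)
      have hcomm : ⟪z - y t, A (x (t+1))⟫ = ⟪A (x (t+1)), z - y t⟫ := real_inner_comm _ _
      linear_combination (-⟪z - y t, A (x (t+1))⟫) * h3 - hcomm
    have hy3 : g (y (t+1)) + cyt * ‖y (t+1) - y t‖ ^ 2 - ⟪A (x (t+1)), y (t+1) - y t⟫
        + (μg / 2 + cyt) * ‖yy - y (t+1)‖ ^ 2
        ≤ g yy + cyt * ‖yy - y t‖ ^ 2 - ⟪A (x (t+1)), yy - y t⟫ := by
      have e1 := hexp' (y (t+1))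
      have e2 := hexp' yy
      linarith
    have E : ⟪A (x (t+1)), yy⟫ - ⟪A xx, y (t+1)⟫ + ⟪A xx, yh t⟫ - ⟪A (x (t+1)), yh t⟫
        + ⟪A (x (t+1)), y (t+1) - y t⟫ - ⟪A (x (t+1)), yy - y t⟫
        = ⟪A (x (t+1)) - A xx, y (t+1) - y t⟫ - α t * ⟪A (x (t+1)) - A xx, y t - y (t-1)⟫ := by
      rw [hyh t ht]
      simp only [inner_add_right, inner_sub_right, inner_sub_left, real_inner_smul_right]
      ring
    have raw : L (x (t+1)) yy - L xx (y (t+1)) ≤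
        ⟪A (x (t+1)) - A xx, y (t+1) - y t⟫ - α t * ⟪A (x (t+1)) - A xx, y t - y (t-1)⟫
        + cxt * ‖xx - x t‖ ^ 2 - cxt * ‖xx - x (t+1)‖ ^ 2 - cxt * ‖x (t+1) - x t‖ ^ 2
        + cyt * ‖yy - y t‖ ^ 2 - (cyt + μg / 2) * ‖yy - y (t+1)‖ ^ 2
        - cyt * ‖y (t+1) - y t‖ ^ 2 := by
      rw [hL, hL]
      linarith
    have rawW := mul_le_mul_of_nonneg_left raw (le_of_lt ht1)
    have convert : ((t:ℝ)+1) * (⟪A (x (t+1)) - A xx, y (t+1) - y t⟫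
        - α t * ⟪A (x (t+1)) - A xx, y t - y (t-1)⟫
        + cxt * ‖xx - x t‖ ^ 2 - cxt * ‖xx - x (t+1)‖ ^ 2 - cxt * ‖x (t+1) - x t‖ ^ 2
        + cyt * ‖yy - y t‖ ^ 2 - (cyt + μg / 2) * ‖yy - y (t+1)‖ ^ 2
        - cyt * ‖y (t+1) - y t‖ ^ 2) =
        ((t:ℝ)+1) * ⟪A (x (t+1)) - A xx, y (t+1) - y t⟫
        - (t:ℝ) * ⟪A (x (t+1)) - A xx, y t - y (t-1)⟫
        + τ * ‖A‖^2/2 * ‖xx - x t‖^2 - τ * ‖A‖^2/2 * ‖xx - x (t+1)‖^2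
        - τ * ‖A‖^2/2 * ‖x (t+1) - x t‖^2
        + ((t:ℝ)+1)^2*ρ * ‖yy - y t‖^2
        - (((t:ℝ)+1)^2 + 2.5*((t:ℝ)+1))*ρ * ‖yy - y (t+1)‖^2
        - ((t:ℝ)+1)^2*ρ * ‖y (t+1) - y t‖^2 := by
      have e1 : ((t:ℝ)+1) * cxt = τ * ‖A‖^2/2 := by
        rw [hcxt]
        field_simp
      have e2 : ((t:ℝ)+1) * cyt = ((t:ℝ)+1)^2*ρ := by
        rw [hcyt, hρ]; ring
      have e3 : ((t:ℝ)+1) * α t = (t:ℝ) := by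
        rw [hα]
        field_simp
      linear_combination (‖xx - x t‖^2 - ‖xx - x (t+1)‖^2 - ‖x (t+1) - x t‖^2) * e1
        + (‖yy - y t‖^2 - ‖yy - y (t+1)‖^2 - ‖y (t+1) - y t‖^2) * e2
        + (-((t:ℝ)+1) * ‖yy - y (t+1)‖^2) * hμρ
        + (-⟪A (x (t+1)) - A xx, y t - y (t-1)⟫) * e3
    linarith
  -- elementary inner-product cancellation
  have key46 : ∀ (u v : E) (w : F), ⟪A u - A v, w⟫ + ⟪A v - A u, w⟫ = 0 := by
    intro u v w
    rw [← inner_add_left, show A u - A v + (A v - A u) = 0 from by abel, inner_zero_left]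
  -- the telescoping invariant
  have inv : ∀ n : ℕ, 1 ≤ n →
      (∑ t ∈ Finset.Icc 1 n, ((t:ℝ)+1) * (L (x (t+1)) yy - L xx (y (t+1))))
        + ((n:ℝ)+1) * ⟪A xx - A (x (n+1)), y (n+1) - y n⟫ ≤
      (τ * ‖A‖^2/2 * ‖xx - x 1‖^2 + 4*ρ * ‖yy - y 1‖^2)
        - τ * ‖A‖^2/2 * ‖xx - x (n+1)‖^2
        - (((n:ℝ)+1)^2 + 2.5*((n:ℝ)+1))*ρ * ‖yy - y (n+1)‖^2
        - ((n:ℝ)+1)^2*ρ * ‖y (n+1) - y n‖^2 := by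
    intro n hn
    induction n, hn using Nat.le_induction with
    | base =>
      have hstep := step 1 le_rfl
      rw [Finset.Icc_self, Finset.sum_singleton]
      push_cast at hstep ⊢
      have h0 : y 1 - y 0 = 0 := by rw [hy0, sub_self]
      have hz : ⟪A (x 2) - A xx, y 1 - y 0⟫ = 0 := by
        rw [h0, inner_zero_right]
      have hflip := key46 xx (x 2) (y 2 - y 1)
      have hdrop : 0 ≤ τ * ‖A‖^2/2 * ‖x 2 - x 1‖^2 := by positivity
      linarith
    | succ n hn ih =>
      have hstep := step (n+1) (by omega)
      simp only [Nat.add_sub_cancel] at hstep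
      rw [Finset.sum_Icc_succ_top (by omega : 1 ≤ n+1)]
      push_cast at hstep ih ⊢
      have hkR : (1:ℝ) ≤ (n:ℝ) := by exact_mod_cast hn
      have base1 : ⟪A xx - A (x (n+1)), y (n+1) - y n⟫
          + ⟪A (x (n+1+1)) - A xx, y (n+1) - y n⟫
          + ⟪A (x (n+1) - x (n+1+1)), y (n+1) - y n⟫ = 0 := by
        rw [map_sub, ← inner_add_left, ← inner_add_left,
          show A xx - A (x (n+1)) + (A (x (n+1+1)) - A xx) + (A (x (n+1)) - A (x (n+1+1))) = 0
            from by abel, inner_zero_left]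
      have EEK : ((n:ℝ)+1) * ⟪A xx - A (x (n+1)), y (n+1) - y n⟫
          + ((n:ℝ)+1) * ⟪A (x (n+1+1)) - A xx, y (n+1) - y n⟫
          + ((n:ℝ)+1) * ⟪A (x (n+1) - x (n+1+1)), y (n+1) - y n⟫ = 0 := by
        linear_combination ((n:ℝ)+1) * base1
      have base2 := key46 (x (n+1+1)) xx (y (n+1+1) - y (n+1))
      have EcrossK : ((n:ℝ)+2) * ⟪A (x (n+1+1)) - A xx, y (n+1+1) - y (n+1)⟫
          + ((n:ℝ)+2) * ⟪A xx - A (x (n+1+1)), y (n+1+1) - y (n+1)⟫ = 0 := by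
        linear_combination ((n:ℝ)+2) * base2
      have Y := young_ineq A (x (n+1) - x (n+1+1)) (y (n+1) - y n) ((n:ℝ)+1) τ
        (by positivity) hτpos
      rw [show ‖x (n+1) - x (n+1+1)‖ = ‖x (n+1+1) - x (n+1)‖ from norm_sub_rev _ _] at Y
      rw [show ((n:ℝ)+1)^2/(2*τ) = ((n:ℝ)+1)^2*ρ from by rw [hρ]; ring] at Y
      have hcoefρ : ((n:ℝ)+1+1)^2*ρ ≤ (((n:ℝ)+1)^2 + 2.5*((n:ℝ)+1))*ρ := by
        nlinarith [mul_nonneg hρ0 (by linarith : (0:ℝ) ≤ (n:ℝ) - 1)]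
      have CB := mul_le_mul_of_nonneg_right hcoefρ
        (by positivity : (0:ℝ) ≤ ‖yy - y (n+1)‖^2)
      linarith
  -- drop the cross term
  have hSB : (∑ t ∈ Finset.Icc 1 k, ((t:ℝ)+1) * (L (x (t+1)) yy - L xx (y (t+1))))
      ≤ τ * ‖A‖^2/2 * ‖xx - x 1‖^2 + 4*ρ * ‖yy - y 1‖^2 := by
    have h := inv k hk
    have Y := young_ineq A (x (k+1) - xx) (y (k+1) - y k) ((k:ℝ)+1) τ (by positivity) hτpos
    rw [show ‖x (k+1) - xx‖ = ‖xx - x (k+1)‖ from norm_sub_rev _ _] at Y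
    rw [show ((k:ℝ)+1)^2/(2*τ) = ((k:ℝ)+1)^2*ρ from by rw [hρ]; ring] at Y
    have base1 : ⟪A xx - A (x (k+1)), y (k+1) - y k⟫
        + ⟪A (x (k+1) - xx), y (k+1) - y k⟫ = 0 := by
      rw [map_sub, ← inner_add_left,
        show A xx - A (x (k+1)) + (A (x (k+1)) - A xx) = 0 from by abel, inner_zero_left]
    have EQ : ((k:ℝ)+1) * ⟪A xx - A (x (k+1)), y (k+1) - y k⟫
        + ((k:ℝ)+1) * ⟪A (x (k+1) - xx), y (k+1) - y k⟫ = 0 := by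
      linear_combination ((k:ℝ)+1) * base1
    have hp1 : 0 ≤ (((k:ℝ)+1)^2 + 2.5*((k:ℝ)+1))*ρ * ‖yy - y (k+1)‖^2 :=
      mul_nonneg (mul_nonneg (by positivity) hρ0) (by positivity)
    have hp2 : 0 ≤ τ * ‖A‖^2/2 * ‖xx - x (k+1)‖^2 := by positivity
    linarith
  -- Jensen step
  have hWsum : ∀ n : ℕ, (∑ t ∈ Finset.Icc 1 n, ((t:ℝ)+1)) = (n:ℝ)*((n:ℝ)+3)/2 := by
    intro n
    induction n with
    | zero => simp
    | succ m ihm =>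
      rw [Finset.sum_Icc_succ_top (by omega : 1 ≤ m+1), ihm]
      push_cast
      ring
  have hkR : (1:ℝ) ≤ (k:ℝ) := by exact_mod_cast hk
  obtain ⟨W, hWdef⟩ : ∃ w : ℝ, w = ∑ t ∈ Finset.Icc 1 k, ((t:ℝ)+1) := ⟨_, rfl⟩
  have hWval : W = (k:ℝ)*((k:ℝ)+3)/2 := by rw [hWdef, hWsum]
  have hWpos : 0 < W := by rw [hWval]; nlinarith
  have hWne : W ≠ 0 := ne_of_gt hWpos
  rw [← hWdef]
  have hcsum : ∑ t ∈ Finset.Icc 1 k, W⁻¹*((t:ℝ)+1) = 1 := by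
    rw [← Finset.mul_sum, ← hWdef, inv_mul_cancel₀ hWne]
  have hcnn : ∀ t ∈ Finset.Icc 1 k, 0 ≤ W⁻¹*((t:ℝ)+1) := by
    intro t _
    have h1 : 0 ≤ W⁻¹ := inv_nonneg.mpr hWpos.le
    positivity
  have hxtil : W⁻¹ • (∑ t ∈ Finset.Icc 1 k, ((t:ℝ)+1) • x (t+1))
      = ∑ t ∈ Finset.Icc 1 k, (W⁻¹*((t:ℝ)+1)) • x (t+1) := by
    rw [Finset.smul_sum]; simp only [smul_smul]
  have hytil : W⁻¹ • (∑ t ∈ Finset.Icc 1 k, ((t:ℝ)+1) • y (t+1))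
      = ∑ t ∈ Finset.Icc 1 k, (W⁻¹*((t:ℝ)+1)) • y (t+1) := by
    rw [Finset.smul_sum]; simp only [smul_smul]
  rw [hxtil, hytil, hL, hL]
  have hfJ := hf.map_sum_le (t := Finset.Icc 1 k) (w := fun t => W⁻¹*((t:ℝ)+1))
    (p := fun t => x (t+1)) hcnn hcsum (fun i _ => Set.mem_univ _)
  have hgc : ConvexOn ℝ Set.univ g := by
    refine ⟨hg.1, fun u hu v hv a b ha hb hab => ?_⟩
    have h := hg.2 hu hv ha hb hab
    have hnn : 0 ≤ a*b*(μg/2*‖u - v‖^2) := by positivity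
    simp only [smul_eq_mul] at h ⊢
    linarith
  have hgJ := hgc.map_sum_le (t := Finset.Icc 1 k) (w := fun t => W⁻¹*((t:ℝ)+1))
    (p := fun t => y (t+1)) hcnn hcsum (fun i _ => Set.mem_univ _)
  simp only [smul_eq_mul] at hfJ hgJ
  have hinx : ⟪A (∑ t ∈ Finset.Icc 1 k, (W⁻¹*((t:ℝ)+1)) • x (t+1)), yy⟫
      = ∑ t ∈ Finset.Icc 1 k, (W⁻¹*((t:ℝ)+1)) * ⟪A (x (t+1)), yy⟫ := by
    rw [map_sum, sum_inner]
    refine Finset.sum_congr rfl fun i _ => ?_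
    rw [map_smul]
    exact real_inner_smul_left _ _ _
  have hiny : ⟪A xx, ∑ t ∈ Finset.Icc 1 k, (W⁻¹*((t:ℝ)+1)) • y (t+1)⟫
      = ∑ t ∈ Finset.Icc 1 k, (W⁻¹*((t:ℝ)+1)) * ⟪A xx, y (t+1)⟫ := by
    rw [inner_sum]
    refine Finset.sum_congr rfl fun i _ => ?_
    exact real_inner_smul_right _ _ _
  have hgyy : ∑ t ∈ Finset.Icc 1 k, W⁻¹*((t:ℝ)+1) * g yy = g yy := by
    rw [← Finset.sum_mul, hcsum, one_mul]
  have hfxx : ∑ t ∈ Finset.Icc 1 k, W⁻¹*((t:ℝ)+1) * f xx = f xx := by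
    rw [← Finset.sum_mul, hcsum, one_mul]
  have hsplit : W⁻¹ * (∑ t ∈ Finset.Icc 1 k, ((t:ℝ)+1) * (L (x (t+1)) yy - L xx (y (t+1))))
      = (∑ t ∈ Finset.Icc 1 k, W⁻¹*((t:ℝ)+1) * f (x (t+1)))
        + (∑ t ∈ Finset.Icc 1 k, W⁻¹*((t:ℝ)+1) * ⟪A (x (t+1)), yy⟫)
        - g yy - f xx
        - (∑ t ∈ Finset.Icc 1 k, W⁻¹*((t:ℝ)+1) * ⟪A xx, y (t+1)⟫)
        + (∑ t ∈ Finset.Icc 1 k, W⁻¹*((t:ℝ)+1) * g (y (t+1))) := by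
    rw [Finset.mul_sum]
    have hsummand : ∀ t ∈ Finset.Icc 1 k,
        W⁻¹ * (((t:ℝ)+1) * (L (x (t+1)) yy - L xx (y (t+1))))
        = W⁻¹*((t:ℝ)+1) * f (x (t+1)) + W⁻¹*((t:ℝ)+1) * ⟪A (x (t+1)), yy⟫
          - W⁻¹*((t:ℝ)+1) * g yy - W⁻¹*((t:ℝ)+1) * f xx
          - W⁻¹*((t:ℝ)+1) * ⟪A xx, y (t+1)⟫ + W⁻¹*((t:ℝ)+1) * g (y (t+1)) := by
      intro t _
      rw [hL, hL]
      ring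
    rw [Finset.sum_congr rfl hsummand]
    simp only [Finset.sum_add_distrib, Finset.sum_sub_distrib]
    rw [hgyy, hfxx]
  have h2 := mul_le_mul_of_nonneg_left hSB (inv_nonneg.mpr hWpos.le)
  have h3 : W⁻¹ * (τ * ‖A‖^2/2 * ‖xx - x 1‖^2 + 4*ρ * ‖yy - y 1‖^2)
      = 2 / ((k : ℝ) * ((k:ℝ) + 3)) *
          (‖A‖ ^ 2 * τ * ‖xx - x 1‖ ^ 2 / 2 + 2 * ‖yy - y 1‖ ^ 2 / τ) := by
    rw [hWval, hρ]
    have hkpos : (0:ℝ) < (k:ℝ)*((k:ℝ)+3) := by nlinarith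
    field_simp
    ring
  rw [hinx, hiny]
  linarith
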